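/- Let R be a perfect F_p-algebra and T = F^n + a₁F^{n-1} + ⋯ + aₙ a monic element of R[F^{±1}] with aᵢ ∈ R. Then the cyclic left module R[F^{±1}]/R[F^{±1}]·T is algebraic, i.e., every element satisfies a monic polynomial equation in F with coefficients in R. -/

import Mathlib

section Aux

variable {R : Type*} [CommRing R] {A : Type*} [Ring A]

lemma auxCommPow (p : ℕ) (ι : R →+* A) (u : Aˣ)
    (hcomm : ∀ a : R, (u : A) * ι a = ι (a ^ p) * u) (k : ℕ) (a : R) :
    (u : A) ^ k * ι a = ι (a ^ p ^ k) * (u : A) ^ k := by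
  induction k with
  | zero => simp
  | succ k ih =>
    rw [pow_succ', mul_assoc, ih, ← mul_assoc, hcomm, mul_assoc, ← pow_succ',
      ← pow_mul, ← pow_succ]

/-- The "window" element `∑_{t<n} ι (v t) u^t`. -/
noncomputable def Wfun (n : ℕ) (ι : R →+* A) (u : Aˣ) (v : ℕ → R) : A :=
  ∑ t ∈ Finset.range n, ι (v t) * (u : A) ^ t

/-- The semilinear step map on window vectors. -/
noncomputable def Phifun (p n : ℕ) (c' : ℕ → R) (v : ℕ → R) : ℕ → R :=
  fun s => (if s = 0 then 0 else v (s - 1) ^ p) - v (n - 1) ^ p * c' (n - 1 - s)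

lemma auxStep (p : ℕ) (ι : R →+* A) (u : Aˣ)
    (hcomm : ∀ a : R, (u : A) * ι a = ι (a ^ p) * u)
    (n : ℕ) (hn : 0 < n) (c' : ℕ → R) (T : A)
    (hT' : (u : A) ^ n = T - ∑ s ∈ Finset.range n, ι (c' (n - 1 - s)) * (u : A) ^ s)
    (v : ℕ → R) :
    (u : A) * Wfun n ι u v = Wfun n ι u (Phifun p n c' v) + ι (v (n - 1) ^ p) * T := by
  have hg : ∀ s : ℕ, ι (Phifun p n c' v s) * (u : A) ^ s
      = (if s = 0 then 0 else ι (v (s - 1) ^ p) * (u : A) ^ s)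
        - ι (v (n - 1) ^ p) * (ι (c' (n - 1 - s)) * (u : A) ^ s) := by
    intro s
    simp only [Phifun, map_sub, map_mul, apply_ite ι, map_zero, sub_mul, ite_mul, zero_mul,
      mul_assoc]
  calc (u : A) * Wfun n ι u v
      = ∑ t ∈ Finset.range n, ι (v t ^ p) * (u : A) ^ (t + 1) := by
        rw [Wfun, Finset.mul_sum]
        refine Finset.sum_congr rfl fun t _ => ?_
        rw [← mul_assoc, hcomm, mul_assoc, ← pow_succ']
    _ = ∑ s ∈ Finset.range (n + 1), (if s = 0 then 0 else ι (v (s - 1) ^ p) * (u : A) ^ s) := by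
        rw [Finset.sum_range_succ']
        simp
    _ = (∑ s ∈ Finset.range n, (if s = 0 then 0 else ι (v (s - 1) ^ p) * (u : A) ^ s))
        + ι (v (n - 1) ^ p) * (u : A) ^ n := by
        rw [Finset.sum_range_succ, if_neg hn.ne']
    _ = Wfun n ι u (Phifun p n c' v) + ι (v (n - 1) ^ p) * T := by
        rw [hT', Wfun]
        rw [Finset.sum_congr rfl fun s _ => hg s, Finset.sum_sub_distrib,
          mul_sub, Finset.mul_sum]
        abel

/-- "reducible to window form modulo the left ideal generated by T" -/
def Red (n : ℕ) (ι : R →+* A) (u : Aˣ) (T : A) (y : A) : Prop :=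
  ∃ v : ℕ → R, ∃ b : A, y = Wfun n ι u v + b * T

variable {n : ℕ} {ι : R →+* A} {u : Aˣ} {T : A}

lemma Wfun_zero : Wfun n ι u (0 : ℕ → R) = 0 := by simp [Wfun]

lemma red_zero : Red n ι u T 0 := ⟨0, 0, by simp [Wfun_zero]⟩

lemma red_add {y z : A} (hy : Red n ι u T y) (hz : Red n ι u T z) : Red n ι u T (y + z) := by
  obtain ⟨v, b, rfl⟩ := hy
  obtain ⟨w, d, rfl⟩ := hz
  refine ⟨v + w, b + d, ?_⟩
  simp only [Wfun, Pi.add_apply, map_add, add_mul, Finset.sum_add_distrib]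
  abel

lemma red_neg {y : A} (hy : Red n ι u T y) : Red n ι u T (-y) := by
  obtain ⟨v, b, rfl⟩ := hy
  refine ⟨-v, -b, ?_⟩
  simp only [Wfun, Pi.neg_apply, map_neg, neg_mul, Finset.sum_neg_distrib, neg_add]

lemma red_sub {y z : A} (hy : Red n ι u T y) (hz : Red n ι u T z) : Red n ι u T (y - z) := by
  rw [sub_eq_add_neg]; exact red_add hy (red_neg hz)

lemma red_bT (b : A) : Red n ι u T (b * T) := ⟨0, b, by simp [Wfun_zero]⟩

lemma red_sum {s : Finset ℤ} {f : ℤ → A} (h : ∀ i ∈ s, Red n ι u T (f i)) :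
    Red n ι u T (∑ i ∈ s, f i) :=
  Finset.sum_induction f _ (fun _ _ => red_add) red_zero h

lemma red_sum' {s : Finset ℕ} {f : ℕ → A} (h : ∀ i ∈ s, Red n ι u T (f i)) :
    Red n ι u T (∑ i ∈ s, f i) :=
  Finset.sum_induction f _ (fun _ _ => red_add) red_zero h

lemma red_single (p : ℕ) (hcomm : ∀ a : R, (u : A) * ι a = ι (a ^ p) * u)
    (c' : ℕ → R)
    (hT' : (u : A) ^ n = T - ∑ s ∈ Finset.range n, ι (c' (n - 1 - s)) * (u : A) ^ s) :
    ∀ j (r : R), Red n ι u T (ι r * (u : A) ^ j) := by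
  intro j
  induction j using Nat.strong_induction_on with
  | _ j ih =>
    intro r
    by_cases hj : j < n
    · refine ⟨fun t => if t = j then r else 0, 0, ?_⟩
      simp only [Wfun, apply_ite ι, map_zero, ite_mul, zero_mul]
      rw [Finset.sum_ite_eq' (Finset.range n) j (fun t => ι r * (u : A) ^ t),
        if_pos (Finset.mem_range.mpr hj), add_zero]
    · push_neg at hj
      have key : ι r * (u : A) ^ j
          = (ι r * (u : A) ^ (j - n)) * T
            - ∑ s ∈ Finset.range n,
                ι (r * c' (n - 1 - s) ^ p ^ (j - n)) * (u : A) ^ (j - n + s) := by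
        have h1 : (u : A) ^ j = (u : A) ^ (j - n) * (u : A) ^ n := by
          rw [← pow_add, Nat.sub_add_cancel hj]
        rw [h1, hT', ← mul_assoc, mul_sub, Finset.mul_sum]
        congr 1
        refine Finset.sum_congr rfl fun s _ => ?_
        rw [← mul_assoc, mul_assoc (ι r), auxCommPow p ι u hcomm (j - n), ← mul_assoc,
          ← map_mul, mul_assoc, ← pow_add]
      rw [key]
      refine red_sub (red_bT _) (red_sum' fun s hs => ?_)
      have : j - n + s < j := by
        have := Finset.mem_range.mp hs; omega
      exact ih _ this _

end Aux

/-- Let `R` be a perfect `F_p`-algebra and `T = F^n + a₁F^{n-1} + ⋯ + aₙ` a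
monic element of the twisted Laurent polynomial ring `R[F^{±1}]` (encoded abstractly as in
the other statements: a ring `A` with `ι : R → A`, a unit `u` playing the role of `F`, the
twisted commutation rule, and freeness over `R` on the powers `F^i, i ∈ ℤ`).  Then the
cyclic left module `R[F^{±1}]/R[F^{±1}]·T` is algebraic: every element `x` (i.e. every coset
`x + R[F^{±1}]·T`) satisfies a monic polynomial equation in `F` with coefficients in `R`,
expressed by saying that `F^m x + Σ ι(aᵢ) F^{m-i} x` lies in the left ideal `R[F^{±1}]·T`,
i.e. equals `b * T` for some `b`. -/
theorem stmt5 (p : ℕ) [Fact p.Prime] (R : Type*) [CommRing R] [CharP R p] [PerfectRing R p]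
    (A : Type*) [Ring A] (ι : R →+* A) (u : Aˣ)
    (hcomm : ∀ a : R, (u : A) * ι a = ι (a ^ p) * u)
    (hbasis : Function.Bijective fun c : ℤ →₀ R => c.sum fun i a => ι a * ((u ^ i : Aˣ) : A))
    (n : ℕ) (hn : 0 < n) (c : Fin n → R) (T : A)
    (hT : T = (u : A) ^ n + ∑ i : Fin n, ι (c i) * (u : A) ^ (n - 1 - i.1)) :
    ∀ x : A, ∃ m, 0 < m ∧ ∃ a : Fin m → R, ∃ b : A,
      (u : A) ^ m * x + ∑ i : Fin m, ι (a i) * (u : A) ^ (m - 1 - i.1) * x = b * T := by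
  classical
  set c' : ℕ → R := fun i => if h : i < n then c ⟨i, h⟩ else 0 with hc'
  have hc'ap : ∀ i (h : i < n), c' i = c ⟨i, h⟩ := by
    intro i h; simp only [hc']; rw [dif_pos h]
  have hT' : (u : A) ^ n = T - ∑ s ∈ Finset.range n, ι (c' (n - 1 - s)) * (u : A) ^ s := by
    have h1 : ∑ i : Fin n, ι (c i) * (u : A) ^ (n - 1 - i.1)
        = ∑ i ∈ Finset.range n, ι (c' i) * (u : A) ^ (n - 1 - i) := by
      rw [← Fin.sum_univ_eq_sum_range (fun i => ι (c' i) * (u : A) ^ (n - 1 - i)) n]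
      exact Finset.sum_congr rfl fun i _ => by rw [hc'ap i.1 i.2]
    have h2 : ∑ i ∈ Finset.range n, ι (c' i) * (u : A) ^ (n - 1 - i)
        = ∑ s ∈ Finset.range n, ι (c' (n - 1 - s)) * (u : A) ^ s := by
      rw [← Finset.sum_range_reflect (fun s => ι (c' (n - 1 - s)) * (u : A) ^ s) n]
      refine Finset.sum_congr rfl fun i hi => ?_
      have hlt := Finset.mem_range.mp hi
      have he : n - 1 - (n - 1 - i) = i := by omega
      rw [he]
    rw [hT, h1, h2]; abel
  intro x
  obtain ⟨cf, hcf⟩ := hbasis.2 x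
  set k := cf.support.sup (fun i => i.natAbs) with hk
  -- initial reduction of `u^k * x` to window form
  have hred0 : Red n ι u T ((u : A) ^ k * x) := by
    rw [← hcf]
    have hdef : (fun c : ℤ →₀ R => c.sum fun i a => ι a * ((u ^ i : Aˣ) : A)) cf
        = ∑ i ∈ cf.support, ι (cf i) * ((u ^ i : Aˣ) : A) := rfl
    rw [hdef, Finset.mul_sum]
    refine red_sum fun i hi => ?_
    have hik : (0 : ℤ) ≤ (k : ℤ) + i := by
      have h : i.natAbs ≤ k := Finset.le_sup (f := fun i : ℤ => i.natAbs) hi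
      omega
    have hterm : (u : A) ^ k * (ι (cf i) * ((u ^ i : Aˣ) : A))
        = ι (cf i ^ p ^ k) * (u : A) ^ ((k : ℤ) + i).toNat := by
      rw [← mul_assoc, auxCommPow p ι u hcomm, mul_assoc]
      congr 1
      have e1 : (u : A) ^ k * ((u ^ i : Aˣ) : A) = ((u ^ ((k : ℤ) + i) : Aˣ) : A) := by
        rw [← Units.val_pow_eq_pow_val, ← Units.val_mul, ← zpow_natCast u k, ← zpow_add]
      have h3 : ((k : ℤ) + i) = (((k : ℤ) + i).toNat : ℤ) := (Int.toNat_of_nonneg hik).symm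
      rw [e1]
      conv_lhs => rw [h3]
      rw [zpow_natCast, Units.val_pow_eq_pow_val]
    rw [hterm]
    exact red_single p hcomm c' hT' _ _
  obtain ⟨v₀, b₀, hv₀⟩ := hred0
  -- the iterated window vectors
  have hbj : ∀ j : ℕ, ∃ b : A,
      (u : A) ^ (k + j) * x = Wfun n ι u ((Phifun p n c')^[j] v₀) + b * T := by
    intro j
    induction j with
    | zero => exact ⟨b₀, by simpa using hv₀⟩
    | succ j ih =>
      obtain ⟨b, hb⟩ := ih
      refine ⟨ι (((Phifun p n c')^[j] v₀ (n - 1)) ^ p) + (u : A) * b, ?_⟩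
      have he : k + (j + 1) = (k + j) + 1 := rfl
      rw [he, pow_succ', mul_assoc, hb, mul_add, auxStep p ι u hcomm n hn c' T hT',
        Function.iterate_succ_apply', add_mul, mul_assoc, add_assoc]
  choose bseq hbseq using hbj
  -- Noetherian argument
  let gens : Set R := (Set.range fun t : Fin n => v₀ t.1) ∪ Set.range c
  have hgfin : gens.Finite := (Set.finite_range _).union (Set.finite_range _)
  let R₀ := Algebra.adjoin ℤ gens
  have hft : Algebra.FiniteType ℤ ↥R₀ :=
    (Subalgebra.fg_iff_finiteType _).1 (Subalgebra.fg_def.2 ⟨gens, hgfin, rfl⟩)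
  haveI := hft
  haveI : IsNoetherianRing ↥R₀ := Algebra.FiniteType.isNoetherianRing ℤ ↥R₀
  have hmem : ∀ j t, t < n → (Phifun p n c')^[j] v₀ t ∈ R₀ := by
    intro j
    induction j with
    | zero =>
      intro t ht
      exact Algebra.subset_adjoin (Or.inl ⟨⟨t, ht⟩, rfl⟩)
    | succ j ih =>
      intro t ht
      rw [Function.iterate_succ_apply']
      show (if t = 0 then 0 else (Phifun p n c')^[j] v₀ (t - 1) ^ p)
          - (Phifun p n c')^[j] v₀ (n - 1) ^ p * c' (n - 1 - t) ∈ R₀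
      refine sub_mem ?_ (mul_mem (pow_mem (ih _ (by omega)) p) ?_)
      · split
        · exact zero_mem _
        · exact pow_mem (ih _ (by omega)) p
      · have hlt : n - 1 - t < n := by omega
        rw [hc'ap _ hlt]
        exact Algebra.subset_adjoin (Or.inr ⟨⟨n - 1 - t, hlt⟩, rfl⟩)
  let vtil : ℕ → (Fin n → ↥R₀) := fun j t => ⟨(Phifun p n c')^[j] v₀ t.1, hmem j t.1 t.2⟩
  let f : ℕ →o Submodule ↥R₀ (Fin n → ↥R₀) :=
    ⟨fun m => Submodule.span ↥R₀ (vtil '' Set.Iio m),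
      fun a b hab => Submodule.span_mono (Set.image_mono fun y hy => lt_of_lt_of_le hy hab)⟩
  obtain ⟨m₀, hm₀⟩ := monotone_stabilizes_iff_noetherian.mpr inferInstance f
  set m' := max m₀ 1 with hm'
  have hm'1 : 1 ≤ m' := le_max_right _ _
  have hmm2 : vtil m' ∈ Submodule.span ↥R₀ (Set.range fun i : Fin m' => vtil i.1) := by
    have himg : vtil '' Set.Iio m' = Set.range (fun i : Fin m' => vtil i.1) := by
      ext y; constructor
      · rintro ⟨j, hj, rfl⟩; exact ⟨⟨j, hj⟩, rfl⟩
      · rintro ⟨i, rfl⟩; exact ⟨i.1, i.2, rfl⟩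
    have h1 : vtil m' ∈ f (m' + 1) :=
      Submodule.subset_span ⟨m', by simp, rfl⟩
    have h2 : f m' = f (m' + 1) := by
      rw [← hm₀ m' (le_max_left _ _), ← hm₀ (m' + 1) (le_trans (le_max_left _ _) (Nat.le_succ _))]
    have : vtil m' ∈ f m' := by rw [h2]; exact h1
    rw [show f m' = Submodule.span ↥R₀ (vtil '' Set.Iio m') from rfl, himg] at this
    exact this
  obtain ⟨abar, habar⟩ := (Submodule.mem_span_range_iff_exists_fun _).mp hmm2
  set aR : ℕ → R := fun i => if h : i < m' then (abar ⟨i, h⟩ : R) else 0 with haR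
  have hcoord : ∀ t, t < n → (Phifun p n c')^[m'] v₀ t
      = ∑ i ∈ Finset.range m', aR i * (Phifun p n c')^[i] v₀ t := by
    intro t ht
    have h1 := congrFun habar ⟨t, ht⟩
    have h2 := congrArg Subtype.val h1
    simp only [Finset.sum_apply, Pi.smul_apply, smul_eq_mul, AddSubmonoidClass.coe_finset_sum,
      MulMemClass.coe_mul, vtil] at h2
    rw [← h2, ← Fin.sum_univ_eq_sum_range (fun i => aR i * (Phifun p n c')^[i] v₀ t) m']
    refine Finset.sum_congr rfl fun i _ => ?_
    have : aR i.1 = (abar i : R) := by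
      simp only [haR]; rw [dif_pos i.2]
    rw [this]
  have hWm : Wfun n ι u ((Phifun p n c')^[m'] v₀)
      = ∑ i ∈ Finset.range m', ι (aR i) * Wfun n ι u ((Phifun p n c')^[i] v₀) := by
    show (∑ t ∈ Finset.range n, ι ((Phifun p n c')^[m'] v₀ t) * (u : A) ^ t) = _
    calc ∑ t ∈ Finset.range n, ι ((Phifun p n c')^[m'] v₀ t) * (u : A) ^ t
        = ∑ t ∈ Finset.range n, ∑ i ∈ Finset.range m',
            ι (aR i) * (ι ((Phifun p n c')^[i] v₀ t) * (u : A) ^ t) := by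
          refine Finset.sum_congr rfl fun t ht => ?_
          rw [hcoord t (Finset.mem_range.mp ht), map_sum, Finset.sum_mul]
          simp only [map_mul, mul_assoc]
      _ = ∑ i ∈ Finset.range m', ι (aR i) *
            ∑ t ∈ Finset.range n, ι ((Phifun p n c')^[i] v₀ t) * (u : A) ^ t := by
          rw [Finset.sum_comm]
          simp only [Finset.mul_sum]
      _ = ∑ i ∈ Finset.range m', ι (aR i) * Wfun n ι u ((Phifun p n c')^[i] v₀) := rfl
  -- final assembly
  refine ⟨k + m', by omega, fun i => if i.1 < m' then -aR (m' - 1 - i.1) else 0,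
    bseq m' - ∑ i ∈ Finset.range m', ι (aR i) * bseq i, ?_⟩
  have hsum1 : (∑ i : Fin (k + m'), ι (if i.1 < m' then -aR (m' - 1 - i.1) else 0)
        * (u : A) ^ (k + m' - 1 - i.1) * x)
      = ∑ i ∈ Finset.range (k + m'), ι (if i < m' then -aR (m' - 1 - i) else 0)
        * (u : A) ^ (k + m' - 1 - i) * x :=
    Fin.sum_univ_eq_sum_range
      (fun i => ι (if i < m' then -aR (m' - 1 - i) else 0) * (u : A) ^ (k + m' - 1 - i) * x)
      (k + m')
  have hsum2 : (∑ i ∈ Finset.range (k + m'), ι (if i < m' then -aR (m' - 1 - i) else 0)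
        * (u : A) ^ (k + m' - 1 - i) * x)
      = ∑ i ∈ Finset.range m', -(ι (aR i) * ((u : A) ^ (k + i) * x)) := by
    rw [← Finset.sum_subset (Finset.range_subset_range.mpr (show m' ≤ k + m' by omega))
      (fun i _ hni => by rw [if_neg (by simpa using hni), map_zero, zero_mul, zero_mul])]
    rw [← Finset.sum_range_reflect (fun i => -(ι (aR i) * ((u : A) ^ (k + i) * x))) m']
    refine Finset.sum_congr rfl fun i hi => ?_
    have hi' := Finset.mem_range.mp hi
    rw [if_pos hi', map_neg, neg_mul, neg_mul]
    have he : k + m' - 1 - i = k + (m' - 1 - i) := by omega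
    rw [he, mul_assoc]
  rw [hsum1, hsum2, Finset.sum_neg_distrib, hbseq m']
  have hsub : ∀ i, ι (aR i) * ((u : A) ^ (k + i) * x)
      = ι (aR i) * Wfun n ι u ((Phifun p n c')^[i] v₀) + ι (aR i) * bseq i * T := by
    intro i
    rw [hbseq i, mul_add, mul_assoc]
  rw [Finset.sum_congr rfl fun i _ => hsub i, Finset.sum_add_distrib, ← hWm, sub_mul,
    Finset.sum_mul]
  abel
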